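/- Let q be an odd positive integer written as q = uv with gcd(u,v) = 1, and let m, n be integers. Choose ū with u·ū ≡ 1 (mod v) and v̄ with v·v̄ ≡ 1 (mod u). Then the Salié sum satisfies the twisted multiplicativity S(m, n; q) = S(m·ū, n·ū; v) · S(m·v̄, n·v̄; u). -/

import Mathlib

open Complex Finset

/-- The Salié sum `S(m, n; c) = Σ*_{x mod c} (x/c) e((m x + n x̄)/c)`,
where `(x/c)` is the Jacobi symbol and `x̄` the inverse of `x` mod `c`. -/
noncomputable def salie (m n : ℤ) (c : ℕ) : ℂ :=
  ∑ x ∈ Finset.range c,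
    if Nat.Coprime x c then
      (jacobiSym (x : ℤ) c : ℂ) *
        Complex.exp (2 * Real.pi * Complex.I *
          (((m * x + n * (((x : ZMod c)⁻¹).val : ℤ) : ℤ)) : ℂ) / (c : ℂ))
    else 0

/-- Auxiliary: `e(k/c)`. -/
noncomputable def salieE (c : ℕ) (k : ℤ) : ℂ :=
  Complex.exp (2 * Real.pi * Complex.I * (k : ℂ) / (c : ℂ))

lemma salieE_congr {c : ℕ} (hc : c ≠ 0) {k k' : ℤ} (h : k ≡ k' [ZMOD (c : ℤ)]) :
    salieE c k = salieE c k' := by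
  obtain ⟨t, ht⟩ := h.dvd
  have hc' : (c : ℂ) ≠ 0 := Nat.cast_ne_zero.mpr hc
  have hk' : (k' : ℂ) = (k : ℂ) + (c : ℂ) * (t : ℂ) := by
    have hz : (k' : ℤ) = k + c * t := by linarith [ht]
    rw [hz]; push_cast; ring
  unfold salieE
  rw [hk', show 2 * (Real.pi : ℂ) * Complex.I * ((k : ℂ) + (c : ℂ) * (t : ℂ)) / (c : ℂ)
      = 2 * (Real.pi : ℂ) * Complex.I * (k : ℂ) / (c : ℂ) + (t : ℂ) * (2 * Real.pi * Complex.I)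
      from by field_simp,
    Complex.exp_add, Complex.exp_int_mul_two_pi_mul_I, mul_one]

lemma salieE_add (c : ℕ) (k l : ℤ) : salieE c (k + l) = salieE c k * salieE c l := by
  unfold salieE
  rw [← Complex.exp_add]
  congr 1
  push_cast
  ring

lemma salieE_mul_left {u v : ℕ} (hu : u ≠ 0) (hv : v ≠ 0) (k : ℤ) :
    salieE (u * v) ((u : ℤ) * k) = salieE v k := by
  have hu' : (u : ℂ) ≠ 0 := Nat.cast_ne_zero.mpr hu
  have hv' : (v : ℂ) ≠ 0 := Nat.cast_ne_zero.mpr hv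
  unfold salieE
  congr 1
  push_cast
  field_simp

lemma salie_eq (m n : ℤ) (c : ℕ) [NeZero c] :
    salie m n c = ∑ x : ZMod c, if IsUnit x then
      (jacobiSym (x.val : ℤ) c : ℂ) *
        salieE c (m * (x.val : ℤ) + n * ((x⁻¹).val : ℤ)) else 0 := by
  rw [salie]
  refine Finset.sum_nbij' (i := fun a : ℕ => ((a : ZMod c)))
    (j := fun x : ZMod c => x.val) (fun a _ => Finset.mem_univ _)
    (fun x _ => Finset.mem_range.mpr (ZMod.val_lt x))
    (fun a ha => ZMod.val_natCast_of_lt (Finset.mem_range.mp ha))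
    (fun x _ => ZMod.natCast_zmod_val x) ?_
  intro a ha
  have hval : ((a : ZMod c)).val = a := ZMod.val_natCast_of_lt (Finset.mem_range.mp ha)
  by_cases h : Nat.Coprime a c
  · rw [if_pos h, if_pos ((ZMod.isUnit_iff_coprime a c).mpr h), hval]
    rfl
  · rw [if_neg h, if_neg (fun hu => h ((ZMod.isUnit_iff_coprime a c).mp hu))]

theorem stmt_5 (q u v : ℕ) (hq : 0 < q) (hqodd : Odd q) (huv : q = u * v)
    (hcop : Nat.Coprime u v) (ubar vbar : ℤ)
    (hubar : (u : ℤ) * ubar ≡ 1 [ZMOD v]) (hvbar : (v : ℤ) * vbar ≡ 1 [ZMOD u])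
    (m n : ℤ) :
    salie m n q = salie (m * ubar) (n * ubar) v * salie (m * vbar) (n * vbar) u := by
  subst huv
  have hu0 : u ≠ 0 := by rintro rfl; simp at hq
  have hv0 : v ≠ 0 := by rintro rfl; simp at hq
  haveI : NeZero u := ⟨hu0⟩
  haveI : NeZero v := ⟨hv0⟩
  haveI : NeZero (u * v) := ⟨hq.ne'⟩
  rw [salie_eq, salie_eq, salie_eq, Finset.sum_mul_sum]
  set e := ZMod.chineseRemainder hcop with he_def
  have he : ∀ x : ZMod (u * v), e x = ((x.val : ZMod u), (x.val : ZMod v)) := by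
    intro x
    have h0 : e x = ZMod.castHom
        (show Nat.lcm u v ∣ u * v by simp [Nat.lcm_dvd_iff]) (ZMod u × ZMod v) x := rfl
    rw [h0, ZMod.castHom_apply]
    ext
    · rw [Prod.fst_zmod_cast, ← ZMod.natCast_val]
    · rw [Prod.snd_zmod_cast, ← ZMod.natCast_val]
  -- reindex the left sum
  rw [show (∑ x : ZMod (u * v), if IsUnit x then
        (jacobiSym (x.val : ℤ) (u * v) : ℂ) *
          salieE (u * v) (m * (x.val : ℤ) + n * ((x⁻¹).val : ℤ)) else 0)
      = ∑ p : ZMod u × ZMod v, (fun x : ZMod (u * v) => if IsUnit x then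
          (jacobiSym (x.val : ℤ) (u * v) : ℂ) *
            salieE (u * v) (m * (x.val : ℤ) + n * ((x⁻¹).val : ℤ)) else 0) (e.symm p)
      from (Equiv.sum_comp e.toEquiv.symm _).symm]
  rw [Fintype.sum_prod_type]
  rw [Finset.sum_comm]
  refine Finset.sum_congr rfl fun b _ => Finset.sum_congr rfl fun a _ => ?_
  dsimp only
  set x := e.symm (a, b) with hx_def
  have hex : e x = (a, b) := e.apply_symm_apply _
  have hxa : ((x.val : ZMod u)) = a := by
    have := (he x).symm.trans hex; exact (Prod.ext_iff.mp this).1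
  have hxb : ((x.val : ZMod v)) = b := by
    have := (he x).symm.trans hex; exact (Prod.ext_iff.mp this).2
  by_cases hx : IsUnit x
  · -- both components are units
    have ha : IsUnit a := by
      have h := hx.map (ZMod.castHom (dvd_mul_right u v) (ZMod u))
      rwa [ZMod.castHom_apply, ← ZMod.natCast_val, hxa] at h
    have hb : IsUnit b := by
      have h := hx.map (ZMod.castHom (dvd_mul_left v u) (ZMod v))
      rwa [ZMod.castHom_apply, ← ZMod.natCast_val, hxb] at h
    have hxainv : (((x⁻¹).val : ZMod u)) = a⁻¹ := by
      have h1 : (x.val : ZMod u) * ((x⁻¹).val : ZMod u) = 1 := by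
        have h := congrArg (ZMod.castHom (dvd_mul_right u v) (ZMod u))
          (ZMod.mul_inv_of_unit x hx)
        rwa [map_mul, map_one, ZMod.castHom_apply, ZMod.castHom_apply,
          ← ZMod.natCast_val, ← ZMod.natCast_val] at h
      rw [hxa] at h1
      exact (ZMod.inv_eq_of_mul_eq_one u a _ h1).symm
    have hxbinv : (((x⁻¹).val : ZMod v)) = b⁻¹ := by
      have h1 : (x.val : ZMod v) * ((x⁻¹).val : ZMod v) = 1 := by
        have h := congrArg (ZMod.castHom (dvd_mul_left v u) (ZMod v))
          (ZMod.mul_inv_of_unit x hx)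
        rwa [map_mul, map_one, ZMod.castHom_apply, ZMod.castHom_apply,
          ← ZMod.natCast_val, ← ZMod.natCast_val] at h
      rw [hxb] at h1
      exact (ZMod.inv_eq_of_mul_eq_one v b _ h1).symm
    -- integer congruences
    have hXa : (x.val : ℤ) ≡ (a.val : ℤ) [ZMOD (u : ℤ)] := by
      rw [← ZMod.intCast_eq_intCast_iff]
      push_cast
      rw [hxa, ZMod.natCast_zmod_val]
    have hXb : (x.val : ℤ) ≡ (b.val : ℤ) [ZMOD (v : ℤ)] := by
      rw [← ZMod.intCast_eq_intCast_iff]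
      push_cast
      rw [hxb, ZMod.natCast_zmod_val]
    have hX'a : ((x⁻¹).val : ℤ) ≡ ((a⁻¹).val : ℤ) [ZMOD (u : ℤ)] := by
      rw [← ZMod.intCast_eq_intCast_iff]
      push_cast
      rw [hxainv, ZMod.natCast_zmod_val]
    have hX'b : ((x⁻¹).val : ℤ) ≡ ((b⁻¹).val : ℤ) [ZMOD (v : ℤ)] := by
      rw [← ZMod.intCast_eq_intCast_iff]
      push_cast
      rw [hxbinv, ZMod.natCast_zmod_val]
    -- Jacobi symbol splits
    have hJ : jacobiSym (x.val : ℤ) (u * v)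
        = jacobiSym (a.val : ℤ) u * jacobiSym (b.val : ℤ) v := by
      rw [jacobiSym.mul_right, jacobiSym.mod_left' hXa, jacobiSym.mod_left' hXb]
    -- exponential splits
    have hsum : (u : ℤ) * ubar + (v : ℤ) * vbar ≡ 1 [ZMOD ((u : ℤ) * (v : ℤ))] := by
      rw [← Int.modEq_and_modEq_iff_modEq_mul (by simpa using hcop)]
      constructor
      · have h0 : (u : ℤ) * ubar ≡ 0 [ZMOD (u : ℤ)] :=
          Int.modEq_zero_iff_dvd.mpr (dvd_mul_right _ _)
        simpa using h0.add hvbar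
      · have h0 : (v : ℤ) * vbar ≡ 0 [ZMOD (v : ℤ)] :=
          Int.modEq_zero_iff_dvd.mpr (dvd_mul_right _ _)
        simpa [add_comm] using hubar.add h0
    set k := m * (x.val : ℤ) + n * ((x⁻¹).val : ℤ) with hk
    have h1 : k ≡ k * ((u : ℤ) * ubar + (v : ℤ) * vbar) [ZMOD ((u * v : ℕ) : ℤ)] := by
      have h2 : k * ((u : ℤ) * ubar + (v : ℤ) * vbar) ≡ k * 1 [ZMOD ((u : ℤ) * (v : ℤ))] :=
        hsum.mul_left k
      rw [mul_one] at h2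
      have h3 : ((u * v : ℕ) : ℤ) = (u : ℤ) * (v : ℤ) := by push_cast; ring
      rw [h3]
      exact h2.symm
    have hE : salieE (u * v) k
        = salieE v (m * ubar * (b.val : ℤ) + n * ubar * ((b⁻¹).val : ℤ))
          * salieE u (m * vbar * (a.val : ℤ) + n * vbar * ((a⁻¹).val : ℤ)) := by
      have hv' : salieE v (k * ubar)
          = salieE v (m * ubar * (b.val : ℤ) + n * ubar * ((b⁻¹).val : ℤ)) := by
        have h4 : k * ubar ≡ (m * (b.val : ℤ) + n * ((b⁻¹).val : ℤ)) * ubar [ZMOD (v : ℤ)] :=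
          ((hXb.mul_left m).add (hX'b.mul_left n)).mul_right ubar
        rw [salieE_congr hv0 h4]
        congr 1
        ring
      have hu' : salieE u (k * vbar)
          = salieE u (m * vbar * (a.val : ℤ) + n * vbar * ((a⁻¹).val : ℤ)) := by
        have h4 : k * vbar ≡ (m * (a.val : ℤ) + n * ((a⁻¹).val : ℤ)) * vbar [ZMOD (u : ℤ)] :=
          ((hXa.mul_left m).add (hX'a.mul_left n)).mul_right vbar
        rw [salieE_congr hu0 h4]
        congr 1
        ring
      calc salieE (u * v) k
          = salieE (u * v) (k * ((u : ℤ) * ubar + (v : ℤ) * vbar)) :=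
            salieE_congr (Nat.mul_ne_zero hu0 hv0) h1
        _ = salieE (u * v) ((u : ℤ) * (k * ubar) + (v : ℤ) * (k * vbar)) := by
            congr 1; ring
        _ = salieE (u * v) ((u : ℤ) * (k * ubar)) * salieE (u * v) ((v : ℤ) * (k * vbar)) :=
            salieE_add _ _ _
        _ = salieE v (k * ubar) * salieE u (k * vbar) := by
            rw [salieE_mul_left hu0 hv0]
            rw [show u * v = v * u from Nat.mul_comm u v, salieE_mul_left hv0 hu0]
        _ = _ := by rw [hv', hu']
    rw [if_pos hx, if_pos ha, if_pos hb, hJ, hE]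
    push_cast
    ring
  · have hnot : ¬ (IsUnit a ∧ IsUnit b) := by
      rintro ⟨ha, hb⟩
      apply hx
      have hab : IsUnit ((a, b) : ZMod u × ZMod v) := by
        obtain ⟨a', rfl⟩ := ha; obtain ⟨b', rfl⟩ := hb
        exact ⟨⟨((a' : ZMod u), (b' : ZMod v)), (((a'⁻¹ : (ZMod u)ˣ) : ZMod u),
          ((b'⁻¹ : (ZMod v)ˣ) : ZMod v)), by ext <;> simp, by ext <;> simp⟩, rfl⟩
      exact hab.map e.symm
    rw [if_neg hx]
    by_cases ha : IsUnit a
    · have hb : ¬ IsUnit b := fun hb => hnot ⟨ha, hb⟩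
      rw [if_neg hb, zero_mul]
    · rw [if_neg ha, mul_zero]
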